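/- Let 0 < γ ≤ 1 and let K ⊂ ℝ^d be a convex body in γ-canonical form. Let p be any point on the boundary ∂K, let h be a supporting hyperplane of K at p, and let w > 0. Let h′ be the hyperplane obtained by translating h by distance w in the direction of the outward normal (away from K). Then the ray emanating from O through p intersects h′ in a unique point p′, and ‖p − p′‖ ≤ w/γ. -/

import Mathlib

open scoped RealInnerProductSpace

/-- Let `0 < γ ≤ 1` and let `K ⊆ ℝ^d` be a convex body in γ-canonical form.
Let `p ∈ ∂K`, let `h` be a supporting hyperplane of `K` at `p` with outward unit normal `v`
(so `K ⊆ {z | ⟪v,z⟫ ≤ ⟪v,p⟫}`), and let `w > 0`. Let `h'` be the translate of `h` by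
distance `w` in direction `v`, i.e. `h' = {z | ⟪v,z⟫ = ⟪v,p⟫ + w}`. Then the ray from the
origin through `p` intersects `h'` in a unique point `p'`, and `‖p - p'‖ ≤ w/γ`. -/
theorem stmt2 {d : ℕ} (γ : ℝ) (hγ0 : 0 < γ) (hγ1 : γ ≤ 1)
    (K : Set (EuclideanSpace ℝ (Fin d)))
    (hK : Convex ℝ K) (hKc : IsCompact K) (hKi : (interior K).Nonempty)
    (hcan₁ : Metric.closedBall (0 : EuclideanSpace ℝ (Fin d)) (γ / 2) ⊆ K)
    (hcan₂ : K ⊆ Metric.closedBall (0 : EuclideanSpace ℝ (Fin d)) (1 / 2))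
    (p : EuclideanSpace ℝ (Fin d)) (hp : p ∈ frontier K)
    (v : EuclideanSpace ℝ (Fin d)) (hv : ‖v‖ = 1)
    (hsupp : ∀ z ∈ K, ⟪v, z⟫ ≤ ⟪v, p⟫)
    (w : ℝ) (hw : 0 < w) :
    ∃ p' : EuclideanSpace ℝ (Fin d),
      ((∃ t : ℝ, 0 ≤ t ∧ p' = t • p) ∧ ⟪v, p'⟫ = ⟪v, p⟫ + w) ∧
      (∀ q : EuclideanSpace ℝ (Fin d),
        ((∃ t : ℝ, 0 ≤ t ∧ q = t • p) ∧ ⟪v, q⟫ = ⟪v, p⟫ + w) → q = p') ∧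
      ‖p - p'‖ ≤ w / γ := by
  have hpK : p ∈ K := by
    have := frontier_subset_closure (s := K) hp
    rwa [hKc.isClosed.closure_eq] at this
  set c : ℝ := ⟪v, p⟫ with hcdef
  have hcγ : γ / 2 ≤ c := by
    have hmem : ((γ / 2) • v : EuclideanSpace ℝ (Fin d)) ∈ K := by
      apply hcan₁
      simp [norm_smul, hv, abs_of_nonneg hγ0.le]
    have := hsupp _ hmem
    rwa [real_inner_smul_right, real_inner_self_eq_norm_sq, hv, one_pow, mul_one] at this
  have hc0 : 0 < c := lt_of_lt_of_le (by positivity) hcγ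
  have hpnorm : ‖p‖ ≤ 1 / 2 := by
    have := hcan₂ hpK
    simpa [Metric.mem_closedBall, dist_zero_right] using this
  set t : ℝ := (c + w) / c with htdef
  have ht0 : 0 ≤ t := by positivity
  refine ⟨t • p, ⟨⟨t, ht0, rfl⟩, ?_⟩, ?_, ?_⟩
  · rw [real_inner_smul_right, ← hcdef, htdef]
    field_simp
  · rintro q ⟨⟨s, hs0, rfl⟩, hq⟩
    rw [real_inner_smul_right, ← hcdef] at hq
    have : s = t := by
      rw [htdef]
      field_simp
      linarith
    rw [this]
  · have h1t : 1 - t = -(w / c) := by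
      rw [htdef]; field_simp; ring
    have : p - t • p = (1 - t) • p := by
      rw [sub_smul, one_smul]
    rw [this, norm_smul, h1t, norm_neg, Real.norm_eq_abs,
      abs_of_nonneg (by positivity : (0:ℝ) ≤ w / c)]
    have h1 : w / c ≤ w / (γ / 2) := by
      apply div_le_div_of_nonneg_left hw.le (by positivity) hcγ
    calc w / c * ‖p‖ ≤ w / (γ / 2) * (1 / 2) := by
          apply mul_le_mul h1 hpnorm (norm_nonneg _) (by positivity)
      _ = w / γ := by field_simp
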